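/- Let A, B ∈ ℂ and φ_0 = A + B, φ_n = B for n ≥ 1, with the induced inner product ⟨·,·⟩_b on polynomials (extended sesquilinearly from monomials). Define polynomials q_0 = 1 and q_n(z) = z^{n−1}(z−1) for n ≥ 1. Then the family {q_n}_{n≥0} is pairwise orthogonal with respect to ⟨·,·⟩_b if and only if conj(A)·B = −(1 + |A|²). -/

import Mathlib

open Finset Polynomial Complex

noncomputable def dbInner (φ : ℕ → ℂ) (j k : ℕ) : ℂ :=
  (if j = k then 1 else 0) +
    if j ≤ k then ∑ s ∈ Finset.range (j + 1), (starRingEnd ℂ) (φ s) * φ (k - j + s)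
    else ∑ s ∈ Finset.range (k + 1), φ s * (starRingEnd ℂ) (φ (j - k + s))

noncomputable def polyInner (φ : ℕ → ℂ) (p q : Polynomial ℂ) : ℂ :=
  ∑ j ∈ p.support, ∑ k ∈ q.support, p.coeff j * (starRingEnd ℂ) (q.coeff k) * dbInner φ j k

lemma db_lt (A B : ℂ) {j k : ℕ} (h : j < k) :
    dbInner (fun n => if n = 0 then A + B else B) j k
      = (starRingEnd ℂ) (A + B) * B + (j : ℂ) * ((starRingEnd ℂ) B * B) := by
  unfold dbInner
  rw [if_neg h.ne, if_pos h.le, Finset.sum_range_succ']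
  have h0 : ∀ s : ℕ, (if k - j + s = 0 then A + B else B) = B := fun s => if_neg (by omega)
  have h1 : ∀ s : ℕ, (if s + 1 = 0 then A + B else B) = B := fun s => if_neg (by omega)
  simp only [h0, h1, if_pos rfl, if_true]
  rw [Finset.sum_const, Finset.card_range, nsmul_eq_mul]
  ring

lemma db_eq (A B : ℂ) (j : ℕ) :
    dbInner (fun n => if n = 0 then A + B else B) j j
      = 1 + (starRingEnd ℂ) (A + B) * (A + B) + (j : ℂ) * ((starRingEnd ℂ) B * B) := by
  unfold dbInner
  rw [if_pos rfl, if_pos le_rfl, Finset.sum_range_succ']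
  have hjj : j - j = 0 := by omega
  have h1 : ∀ s : ℕ, (if s + 1 = 0 then A + B else B) = B := fun s => if_neg (by omega)
  simp only [hjj, Nat.zero_add, h1, if_pos rfl, if_true]
  rw [Finset.sum_const, Finset.card_range, nsmul_eq_mul]
  ring

lemma db_symm (φ : ℕ → ℂ) (j k : ℕ) :
    dbInner φ k j = (starRingEnd ℂ) (dbInner φ j k) := by
  unfold dbInner
  rcases lt_trichotomy j k with h | h | h
  · rw [if_neg h.ne', if_neg (not_le.mpr h), if_neg h.ne, if_pos h.le]
    simp only [add_zero, zero_add, map_add, map_zero, map_sum, map_mul, Complex.conj_conj]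
  · subst h
    simp only [if_pos rfl, if_pos le_rfl, if_true, map_add, map_one, map_sum, map_mul,
      Complex.conj_conj, Nat.sub_self, Nat.zero_add]
    congr 1
    exact Finset.sum_congr rfl fun s _ => mul_comm _ _
  · rw [if_neg h.ne', if_pos h.le, if_neg h.ne, if_neg (not_le.mpr h)]
    simp only [map_add, map_zero, map_sum, map_mul, Complex.conj_conj]

lemma polyInner_sum (φ : ℕ → ℂ) (p q : Polynomial ℂ) (S T : Finset ℕ)
    (hS : p.support ⊆ S) (hT : q.support ⊆ T) :
    polyInner φ p q
      = ∑ j ∈ S, ∑ k ∈ T, p.coeff j * (starRingEnd ℂ) (q.coeff k) * dbInner φ j k := by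
  unfold polyInner
  have h1 : ∀ j : ℕ, ∑ k ∈ q.support, p.coeff j * (starRingEnd ℂ) (q.coeff k) * dbInner φ j k
      = ∑ k ∈ T, p.coeff j * (starRingEnd ℂ) (q.coeff k) * dbInner φ j k := fun j =>
    Finset.sum_subset hT (fun k _ hk => by
      simp [Polynomial.notMem_support_iff.mp hk])
  simp_rw [h1]
  exact Finset.sum_subset hS (fun j _ hj => by
    simp [Polynomial.notMem_support_iff.mp hj])

lemma polyInner_symm (φ : ℕ → ℂ) (p q : Polynomial ℂ) :
    polyInner φ p q = (starRingEnd ℂ) (polyInner φ q p) := by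
  unfold polyInner
  rw [map_sum, Finset.sum_comm]
  refine Finset.sum_congr rfl fun j _ => ?_
  rw [map_sum]
  refine Finset.sum_congr rfl fun k _ => ?_
  rw [map_mul, map_mul, Complex.conj_conj, ← db_symm]
  ring

lemma supp_P (a : ℕ) : (X ^ a * (X - 1) : ℂ[X]).support ⊆ {a, a + 1} := by
  have h : (X ^ a * (X - 1) : ℂ[X]) = X ^ (a + 1) - X ^ a := by ring
  rw [h]
  rw [sub_eq_add_neg]
  refine Polynomial.support_add.trans ?_
  rw [Polynomial.support_neg, Polynomial.support_X_pow,
    Polynomial.support_X_pow]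
  intro x hx
  simp only [Finset.mem_union, Finset.mem_singleton] at hx
  simp [Finset.mem_insert]
  omega

lemma coeff_P (a j : ℕ) : (X ^ a * (X - 1) : ℂ[X]).coeff j
    = (if j = a + 1 then 1 else 0) - (if j = a then 1 else 0) := by
  have h : (X ^ a * (X - 1) : ℂ[X]) = X ^ (a + 1) - X ^ a := by ring
  rw [h, Polynomial.coeff_sub, Polynomial.coeff_X_pow, Polynomial.coeff_X_pow]

lemma inner_PP (φ : ℕ → ℂ) (a b : ℕ) :
    polyInner φ (X ^ a * (X - 1)) (X ^ b * (X - 1))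
      = dbInner φ (a+1) (b+1) - dbInner φ (a+1) b - dbInner φ a (b+1) + dbInner φ a b := by
  rw [polyInner_sum φ _ _ {a, a+1} {b, b+1} (supp_P a) (supp_P b)]
  rw [Finset.sum_pair (by omega : a ≠ a + 1)]
  rw [Finset.sum_pair (by omega : b ≠ b + 1), Finset.sum_pair (by omega : b ≠ b + 1)]
  simp only [coeff_P, if_pos rfl, if_true, if_neg (by omega : ¬ a + 1 = a),
    if_neg (by omega : ¬ b + 1 = b), if_neg (by omega : ¬ a = a + 1),
    if_neg (by omega : ¬ b = b + 1), map_sub, map_one, map_zero]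
  ring

lemma inner_1P (φ : ℕ → ℂ) (b : ℕ) :
    polyInner φ 1 (X ^ b * (X - 1)) = dbInner φ 0 (b+1) - dbInner φ 0 b := by
  rw [polyInner_sum φ _ _ {0} {b, b+1} (by
    intro x hx
    rw [Polynomial.mem_support_iff, Polynomial.coeff_one] at hx
    simp only [Finset.mem_singleton]
    by_contra hne
    exact hx (if_neg hne)) (supp_P b)]
  rw [Finset.sum_singleton, Finset.sum_pair (by omega : b ≠ b + 1)]
  simp only [coeff_P, if_pos rfl, if_true, if_neg (by omega : ¬ b + 1 = b),
    if_neg (by omega : ¬ b = b + 1), map_sub, map_one, map_zero, Polynomial.coeff_one_zero]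
  ring

/-- For φ_0 = A+B, φ_n = B (n ≥ 1), the family q_0 = 1, q_n = z^{n-1}(z-1) is pairwise
orthogonal in ⟨·,·⟩_b if and only if conj(A)·B = -(1+|A|²). -/
theorem stmt3 (A B : ℂ) :
    (∀ m n : ℕ, m ≠ n →
        polyInner (fun n => if n = 0 then A + B else B)
          (if m = 0 then 1 else X ^ (m - 1) * (X - 1))
          (if n = 0 then 1 else X ^ (n - 1) * (X - 1)) = 0)
      ↔ (starRingEnd ℂ) A * B = -(1 + ((‖A‖ : ℝ) : ℂ) ^ 2) := by
  have habs : (((‖A‖ : ℝ) : ℂ)) ^ 2 = (starRingEnd ℂ) A * A := by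
    calc (((‖A‖ : ℝ) : ℂ)) ^ 2 = ((‖A‖ ^ 2 : ℝ) : ℂ) := by push_cast; ring
      _ = ((Complex.normSq A : ℝ) : ℂ) := by rw [Complex.sq_norm]
      _ = (starRingEnd ℂ) A * A := Complex.normSq_eq_conj_mul_self
  rw [habs]
  constructor
  · intro h
    have h01 := h 0 1 (by norm_num)
    simp only [if_pos rfl, if_true, if_neg one_ne_zero] at h01
    rw [show (1:ℕ) - 1 = 0 from rfl] at h01
    rw [inner_1P, db_lt A B (by norm_num : 0 < 0 + 1), db_eq A B 0] at h01
    have h2 := congrArg (starRingEnd ℂ) h01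
    simp only [map_sub, map_add, map_mul, map_one, map_zero, Complex.conj_conj,
      map_natCast, Nat.cast_zero] at h2
    linear_combination -h2
  · intro hc
    have hc2 := congrArg (starRingEnd ℂ) hc
    simp only [map_mul, map_neg, map_add, map_one, Complex.conj_conj] at hc2
    have key1 : ∀ b : ℕ, polyInner (fun n => if n = 0 then A + B else B)
        1 (X ^ b * (X - 1)) = 0 := by
      intro b
      rw [inner_1P]
      rcases Nat.eq_zero_or_pos b with hb | hb
      · subst hb
        rw [db_lt A B (by norm_num : 0 < 0 + 1), db_eq A B 0]
        simp only [map_add, Nat.cast_zero]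
        linear_combination -hc2
      · rw [db_lt A B (by omega : 0 < b + 1), db_lt A B hb]
        ring
    have key2 : ∀ a b : ℕ, a < b → polyInner (fun n => if n = 0 then A + B else B)
        (X ^ a * (X - 1)) (X ^ b * (X - 1)) = 0 := by
      intro a b hab
      rw [inner_PP]
      rcases eq_or_lt_of_le (Nat.succ_le_of_lt hab) with he | hl
      · subst he
        rw [db_lt A B (by omega : a + 1 < a + 1 + 1), db_eq A B (a + 1),
          db_lt A B (by omega : a < a + 1 + 1), db_lt A B (by omega : a < a + 1)]
        simp only [map_add, Nat.cast_add, Nat.cast_one]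
        linear_combination -hc2
      · rw [db_lt A B (by omega : a + 1 < b + 1), db_lt A B hl,
          db_lt A B (by omega : a < b + 1), db_lt A B hab]
        ring
    intro m n hmn
    rcases m with _ | a <;> rcases n with _ | b
    · exact absurd rfl hmn
    · simp only [if_pos rfl, if_true, if_neg (Nat.succ_ne_zero b), Nat.add_sub_cancel]
      exact key1 b
    · simp only [if_pos rfl, if_true, if_neg (Nat.succ_ne_zero a), Nat.add_sub_cancel]
      rw [polyInner_symm, key1 a, map_zero]
    · simp only [if_neg (Nat.succ_ne_zero a), if_neg (Nat.succ_ne_zero b), Nat.add_sub_cancel]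
      rcases lt_trichotomy a b with h | h | h
      · exact key2 a b h
      · exact absurd (by omega : a + 1 = b + 1) hmn
      · rw [polyInner_symm, key2 b a h, map_zero]
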